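/- For any prime p with p ≡ 2 (mod 3), the Legendre symbol (D_p(1,1)/p) equals the Legendre symbol (−2/p). -/

import Mathlib

open Polynomial

/-- `Dp p b c` is the determinant of the `(p-1) × (p-1)` matrix whose `(i,j)` entry
(for `1 ≤ i, j ≤ p-1`) is `(i² + b·i·j + c·j²)^(p-2)`. -/
def Dp (p : ℕ) (b c : ℤ) : ℤ :=
  Matrix.det (Matrix.of fun i j : Fin (p - 1) =>
    (((i : ℕ) + 1 : ℤ) ^ 2 + b * ((i : ℕ) + 1 : ℤ) * ((j : ℕ) + 1 : ℤ)
      + c * ((j : ℕ) + 1 : ℤ) ^ 2) ^ (p - 2))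
namespace DpAux
open Finset Matrix

variable {p : ℕ} [Fact p.Prime]

lemma quad_ne_zero (hp3 : p % 3 = 2) {x y : ZMod p} (hx : x ≠ 0) (hy : y ≠ 0) :
    x ^ 2 + x * y + y ^ 2 ≠ 0 := by
  intro h
  set z : ZMod p := x * y⁻¹ with hzdef
  have hz0 : z ≠ 0 := mul_ne_zero hx (inv_ne_zero hy)
  have hz : z ^ 2 + z + 1 = 0 := by
    have : z ^ 2 + z + 1 = (x ^ 2 + x * y + y ^ 2) * (y ^ 2)⁻¹ := by
      rw [hzdef]
      field_simp
    rw [this, h, zero_mul]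
  have hz3 : z ^ 3 = 1 := by linear_combination (z - 1) * hz
  have h1 : orderOf z ∣ 3 := orderOf_dvd_of_pow_eq_one hz3
  have h2 : orderOf z ∣ p - 1 :=
    orderOf_dvd_of_pow_eq_one (ZMod.pow_card_sub_one_eq_one hz0)
  have hcop : Nat.Coprime 3 (p - 1) := by
    rw [Nat.Prime.coprime_iff_not_dvd (by norm_num)]
    have hp2 := (Fact.out : p.Prime).two_le
    omega
  have : orderOf z ∣ 1 := hcop ▸ Nat.dvd_gcd h1 h2
  have hz1 : z = 1 := orderOf_eq_one_iff.mp (Nat.dvd_one.mp this)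
  rw [hz1] at hz
  have h3 : ((3 : ℕ) : ZMod p) = 0 := by push_cast; linear_combination hz
  have := (ZMod.natCast_eq_zero_iff 3 p).mp h3
  have hp3' := (Nat.prime_dvd_prime_iff_eq (Fact.out : p.Prime) (by norm_num)).mp this
  omega

/-- The equivalence between `Fin (p-1)` and the units of `ZMod p`, `i ↦ i+1`. -/
def unitsEquiv (p : ℕ) [Fact p.Prime] : Fin (p - 1) ≃ (ZMod p)ˣ where
  toFun i := ZMod.unitOfCoprime (i.val + 1) (by
    rw [Nat.coprime_comm, Nat.Prime.coprime_iff_not_dvd (Fact.out : p.Prime)]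
    intro hdvd
    have := Nat.le_of_dvd (Nat.succ_pos _) hdvd
    have := i.isLt
    omega)
  invFun u := ⟨(u : ZMod p).val - 1, by
    have h1 : (u : ZMod p).val < p := ZMod.val_lt _
    have h2 : (u : ZMod p).val ≠ 0 :=
      fun h => Units.ne_zero u ((ZMod.val_eq_zero _).mp h)
    omega⟩
  left_inv i := by
    ext
    simp only [ZMod.coe_unitOfCoprime]
    rw [ZMod.val_natCast, Nat.mod_eq_of_lt (by have := i.isLt; omega)]
    omega
  right_inv u := by
    ext
    have h2 : (u : ZMod p).val ≠ 0 :=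
      fun h => Units.ne_zero u ((ZMod.val_eq_zero _).mp h)
    simp only [ZMod.coe_unitOfCoprime]
    rw [Nat.sub_add_cancel (by omega)]
    exact ZMod.natCast_rightInverse _

lemma sum_units {A : Type*} [AddCommMonoid A] (g : ZMod p → A) :
    ∑ j : Fin (p - 1), g ((j.val + 1 : ℕ) : ZMod p) = ∑ u : (ZMod p)ˣ, g u := by
  refine Fintype.sum_equiv (unitsEquiv p) _ _ fun i => ?_
  simp [unitsEquiv, ZMod.coe_unitOfCoprime]

lemma sum_units_pow (s : ℕ) :
    ∑ u : (ZMod p)ˣ, ((u : ZMod p)) ^ s = if (p - 1) ∣ s then (-1 : ZMod p) else 0 := by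
  have hp2 := (Fact.out : p.Prime).two_le
  split_ifs with hdvd
  · obtain ⟨c, rfl⟩ := hdvd
    have : ∀ u : (ZMod p)ˣ, ((u : ZMod p)) ^ ((p - 1) * c) = 1 := by
      intro u
      have h1 : u ^ (p - 1) = 1 := ZMod.units_pow_card_sub_one_eq_one p u
      calc ((u : ZMod p)) ^ ((p - 1) * c) = (((u ^ (p - 1)) ^ c : (ZMod p)ˣ) : ZMod p) := by
            rw [← pow_mul]; push_cast; ring
        _ = 1 := by rw [h1, one_pow, Units.val_one]
    rw [Finset.sum_congr rfl fun u _ => this u, Finset.sum_const, Finset.card_univ,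
      ZMod.card_units p, nsmul_eq_mul, mul_one]
    have : ((p - 1 : ℕ) : ZMod p) = -1 := by
      rw [Nat.cast_sub (by omega), ZMod.natCast_self]; push_cast; ring
    exact this
  · obtain ⟨g, hg⟩ := IsCyclic.exists_generator (α := (ZMod p)ˣ)
    have horder : orderOf g = p - 1 :=
      (orderOf_eq_card_of_forall_mem_zpowers hg).trans ((Nat.card_eq_fintype_card).trans (ZMod.card_units p))
    have hgs : ((g : ZMod p)) ^ s ≠ 1 := by
      intro h
      have : g ^ s = 1 := by
        ext; push_cast; exact h
      exact hdvd (horder ▸ orderOf_dvd_of_pow_eq_one this)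
    have hre : ∑ u : (ZMod p)ˣ, ((u : ZMod p)) ^ s
        = ∑ u : (ZMod p)ˣ, (((g * u : (ZMod p)ˣ) : ZMod p)) ^ s :=
      (Fintype.sum_bijective (fun u => g * u) (Group.mulLeft_bijective g) _ _
        fun u => rfl).symm
    have hre2 : ∑ u : (ZMod p)ˣ, (((g * u : (ZMod p)ˣ) : ZMod p)) ^ s
        = (g : ZMod p) ^ s * ∑ u : (ZMod p)ˣ, ((u : ZMod p)) ^ s := by
      rw [Finset.mul_sum]
      exact Finset.sum_congr rfl fun u _ => by push_cast; ring
    have := hre.trans hre2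
    have hfactor : ((g : ZMod p) ^ s - 1) * ∑ u : (ZMod p)ˣ, ((u : ZMod p)) ^ s = 0 := by
      linear_combination -this
    rcases mul_eq_zero.mp hfactor with h | h
    · exact absurd (by linear_combination h) hgs
    · exact h


/-- The character sum `S t = ∑_u u^t / (u²+u+1)` over units of `ZMod p`. -/
def S (p : ℕ) [Fact p.Prime] (t : ℕ) : ZMod p :=
  ∑ u : (ZMod p)ˣ, ((u : ZMod p)) ^ t * (((u : ZMod p)) ^ 2 + (u : ZMod p) + 1)⁻¹

lemma S_eval (a : ℕ) (hp : p = 6 * a + 5) (s : ℕ) :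
    S p s = 2 * (3 : ZMod p)⁻¹ -
      (if (-(((4 * a + 3) * s : ℕ) : ZMod (6 * a + 4))).val < 4 * a + 3 then 1 else 0) := by
  haveI : NeZero (6 * a + 4) := ⟨by omega⟩
  have hp3 : p % 3 = 2 := by omega
  set m : ℕ := 4 * a + 3 with hm
  set n : ℕ := 6 * a + 4 with hn
  have hnp : n = p - 1 := by omega
  have h3ne : (3 : ZMod p) ≠ 0 := by
    intro h
    have h3 : ((3 : ℕ) : ZMod p) = 0 := by push_cast; exact h
    have := (ZMod.natCast_eq_zero_iff 3 p).mp h3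
    have := (Nat.prime_dvd_prime_iff_eq (Fact.out : p.Prime) (by norm_num)).mp this
    omega
  -- step 1 : reindex u = w ^ m
  have hbij : Function.Bijective (fun w : (ZMod p)ˣ => w ^ m) := by
    have hinv : ∀ w : (ZMod p)ˣ, (w ^ m) ^ 3 = w := by
      intro w
      have h1 : w ^ (p - 1) = 1 := ZMod.units_pow_card_sub_one_eq_one p w
      have : m * 3 = (p - 1) * 2 + 1 := by omega
      rw [← pow_mul, this, pow_add, pow_mul, h1, one_pow, pow_one, one_mul]
    have hinv' : ∀ w : (ZMod p)ˣ, (w ^ 3) ^ m = w := by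
      intro w
      have h1 : w ^ (p - 1) = 1 := ZMod.units_pow_card_sub_one_eq_one p w
      have : 3 * m = (p - 1) * 2 + 1 := by omega
      rw [← pow_mul, this, pow_add, pow_mul, h1, one_pow, pow_one, one_mul]
    exact Function.bijective_iff_has_inverse.mpr ⟨fun w => w ^ 3, hinv, hinv'⟩
  have hstep1 : S p s = ∑ w : (ZMod p)ˣ,
      ((w : ZMod p)) ^ (m * s) * ((((w : ZMod p)) ^ m) ^ 2 + ((w : ZMod p)) ^ m + 1)⁻¹ := by
    rw [S]
    refine (Fintype.sum_bijective _ hbij _ _ fun w => ?_).symm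
    push_cast
    rw [pow_mul]
  rw [hstep1]
  -- step 2 : split off w = 1 and use the geometric series for w ≠ 1
  have hsplit := (Finset.add_sum_erase Finset.univ
    (fun w : (ZMod p)ˣ => ((w : ZMod p)) ^ (m * s) *
      ((((w : ZMod p)) ^ m) ^ 2 + ((w : ZMod p)) ^ m + 1)⁻¹) (Finset.mem_univ 1)).symm
  rw [hsplit]
  have hone : ((1 : (ZMod p)ˣ) : ZMod p) ^ (m * s) *
      (((((1 : (ZMod p)ˣ) : ZMod p)) ^ m) ^ 2 + (((1 : (ZMod p)ˣ) : ZMod p)) ^ m + 1)⁻¹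
      = (3 : ZMod p)⁻¹ := by
    norm_num
  rw [hone]
  -- geometric series for w ≠ 1
  have hgeom : ∀ w ∈ Finset.univ.erase (1 : (ZMod p)ˣ),
      ((w : ZMod p)) ^ (m * s) * ((((w : ZMod p)) ^ m) ^ 2 + ((w : ZMod p)) ^ m + 1)⁻¹
        = ∑ i ∈ Finset.range m, ((w : ZMod p)) ^ (m * s + i) := by
    intro w hw
    set c : ZMod p := (w : ZMod p) with hc
    have hc1 : c ≠ 1 := by
      intro h
      exact (Finset.mem_erase.mp hw).1 (Units.ext h)
    have hc0 : c ≠ 0 := Units.ne_zero w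
    have hx3 : (c ^ m) ^ 3 = c := by
      rw [← pow_mul]
      have : m * 3 = (p - 1) * 2 + 1 := by omega
      rw [this, pow_add, pow_mul, ZMod.pow_card_sub_one_eq_one hc0, one_pow, pow_one, one_mul]
    have hc1' : c - 1 ≠ 0 := sub_ne_zero.mpr hc1
    have hAinv : ((c ^ m) ^ 2 + c ^ m + 1)⁻¹ = (c ^ m - 1) * (c - 1)⁻¹ := by
      apply inv_eq_of_mul_eq_one_right
      have hA : ((c ^ m) ^ 2 + c ^ m + 1) * (c ^ m - 1) = c - 1 := by
        linear_combination hx3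
      rw [← mul_assoc, hA, mul_inv_cancel₀ hc1']
    have hgs : (c ^ m - 1) * (c - 1)⁻¹ = ∑ i ∈ Finset.range m, c ^ i := by
      rw [geom_sum_eq hc1 m, div_eq_mul_inv]
    rw [hAinv, hgs, Finset.mul_sum]
    exact Finset.sum_congr rfl fun i _ => by rw [← pow_add]
  rw [Finset.sum_congr rfl hgeom]
  rw [Finset.sum_erase_eq_sub (Finset.mem_univ 1)]
  have hat1 : ∑ i ∈ Finset.range m, ((1 : (ZMod p)ˣ) : ZMod p) ^ (m * s + i)
      = (m : ZMod p) := by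
    simp
  rw [hat1, Finset.sum_comm]
  have hin : ∀ i ∈ Finset.range m,
      ∑ w : (ZMod p)ˣ, ((w : ZMod p)) ^ (m * s + i)
        = if i = (-(((m * s : ℕ)) : ZMod n)).val then (-1 : ZMod p) else 0 := by
    intro i hi
    rw [sum_units_pow]
    have him : i < m := Finset.mem_range.mp hi
    congr 1
    rw [eq_iff_iff]
    rw [← hnp]
    constructor
    · intro hd
      have h0 : ((m * s + i : ℕ) : ZMod n) = 0 :=
        (ZMod.natCast_eq_zero_iff _ n).mpr hd
      have hiv : ((i : ℕ) : ZMod n) = -(((m * s : ℕ)) : ZMod n) := by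
        push_cast at h0 ⊢
        linear_combination h0
      rw [← hiv, ZMod.val_natCast, Nat.mod_eq_of_lt (by omega)]
    · intro hi'
      apply (ZMod.natCast_eq_zero_iff _ n).mp
      have hv : ((i : ℕ) : ZMod n) = -(((m * s : ℕ)) : ZMod n) := by
        rw [hi']
        exact ZMod.natCast_rightInverse _
      push_cast at hv ⊢
      linear_combination hv
  rw [Finset.sum_congr rfl hin, Finset.sum_ite_eq' (Finset.range m)
    (-(((m * s : ℕ)) : ZMod n)).val (fun _ => (-1 : ZMod p))]
  have hmcast : ((m : ℕ) : ZMod p) = -(3 : ZMod p)⁻¹ := by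
    have hp0 : ((6 * a + 5 : ℕ) : ZMod p) = 0 := by
      rw [← hp]; exact ZMod.natCast_self p
    field_simp
    rw [hm]
    push_cast at hp0 ⊢
    linear_combination 2 * hp0
  simp only [Finset.mem_range]
  rw [hmcast]
  split_ifs <;> ring

def iot (p : ℕ) (i : Fin (p - 1)) : ZMod p := ((i.val + 1 : ℕ) : ZMod p)

lemma iot_ne_zero (i : Fin (p - 1)) : iot p i ≠ 0 := by
  intro h
  have hd := (ZMod.natCast_eq_zero_iff _ p).mp h
  have := Nat.le_of_dvd (Nat.succ_pos _) hd
  have := i.isLt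
  have hp2 := (Fact.out : p.Prime).two_le
  omega

lemma iot_inj : Function.Injective (iot p) := by
  intro i j h
  have hp2 := (Fact.out : p.Prime).two_le
  have hi := i.isLt; have hj := j.isLt
  have h1 : (iot p i).val = (iot p j).val := by rw [h]
  rw [iot, iot, ZMod.val_natCast, ZMod.val_natCast,
    Nat.mod_eq_of_lt (by omega), Nat.mod_eq_of_lt (by omega)] at h1
  exact Fin.ext (by omega)

lemma pow_sub_two {b : ZMod p} (hb : b ≠ 0) : b ^ (p - 2) = b⁻¹ := by
  have hp2 := (Fact.out : p.Prime).two_le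
  apply eq_inv_of_mul_eq_one_left
  rw [← pow_succ]
  have : p - 2 + 1 = p - 1 := by omega
  rw [this]
  exact ZMod.pow_card_sub_one_eq_one hb

/-- The matrix `(i² + ij + j²)⁻¹` over `ZMod p`. -/
def Mmat (p : ℕ) [Fact p.Prime] : Matrix (Fin (p - 1)) (Fin (p - 1)) (ZMod p) :=
  Matrix.of fun i j => (iot p i ^ 2 + iot p i * iot p j + iot p j ^ 2)⁻¹

open Fin.NatCast in
lemma detM (a : ℕ) (hp : p = 6 * a + 5) :
    (Mmat p).det = ∏ k : Fin (p - 1), S p (2 * (p - 1) + 2 - k.val) := by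
  haveI : NeZero (p - 1) := ⟨by omega⟩
  have hp3 : p % 3 = 2 := by omega
  set σ : Equiv.Perm (Fin (p - 1)) := Equiv.addRight (((p - 3 : ℕ) : Fin (p - 1))) with hσ
  have hsv : (((p - 3 : ℕ) : Fin (p - 1))).val = p - 3 := by
    rw [Fin.val_natCast, Nat.mod_eq_of_lt (by omega)]
  have key : Mmat p * Matrix.vandermonde (iot p) = ((Matrix.vandermonde (iot p)).submatrix id σ) *
      Matrix.diagonal (fun k : Fin (p - 1) => S p (2 * (p - 1) + 2 - k.val)) := by
    ext i k
    rw [Matrix.mul_apply, Matrix.mul_diagonal, Matrix.submatrix_apply, id_eq]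
    have hσk : (σ k).val = (k.val + (p - 3)) % (p - 1) := by
      simp only [hσ, Equiv.coe_addRight, Fin.add_def, hsv]
    set A : ZMod p := iot p i with hA
    have hAne : A ≠ 0 := iot_ne_zero i
    have hA1 : A ^ (p - 1) = 1 := ZMod.pow_card_sub_one_eq_one hAne
    rw [Matrix.vandermonde_apply, hσk, ← pow_eq_pow_mod _ hA1]
    -- turn the j-sum into a sum over units
    have hsum1 : ∑ j, Mmat p i j * Matrix.vandermonde (iot p) j k
        = ∑ u : (ZMod p)ˣ, (A ^ 2 + A * (u : ZMod p) + (u : ZMod p) ^ 2)⁻¹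
            * ((u : ZMod p)) ^ k.val :=
      sum_units (fun x => (A ^ 2 + A * x + x ^ 2)⁻¹ * x ^ k.val)
    rw [hsum1]
    set α : (ZMod p)ˣ := Units.mk0 A hAne with hα
    have hinvol : Function.Involutive (fun v : (ZMod p)ˣ => α * v⁻¹) := by
      intro v
      simp [_root_.mul_inv_rev, inv_inv, ← mul_assoc, mul_inv_cancel]
    have hre : ∑ u : (ZMod p)ˣ, (A ^ 2 + A * (u : ZMod p) + (u : ZMod p) ^ 2)⁻¹
          * ((u : ZMod p)) ^ k.val
        = ∑ v : (ZMod p)ˣ, (A ^ 2 + A * ((α * v⁻¹ : (ZMod p)ˣ) : ZMod p)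
            + (((α * v⁻¹ : (ZMod p)ˣ) : ZMod p)) ^ 2)⁻¹
            * (((α * v⁻¹ : (ZMod p)ˣ) : ZMod p)) ^ k.val :=
      (Fintype.sum_bijective _ hinvol.bijective _ _ fun v => rfl).symm
    rw [hre, S, Finset.mul_sum]
    refine Finset.sum_congr rfl fun v _ => ?_
    set c : ZMod p := (v : ZMod p) with hc
    have hc0 : c ≠ 0 := Units.ne_zero v
    have hc1 : c ^ (p - 1) = 1 := ZMod.pow_card_sub_one_eq_one hc0
    have hq : c ^ 2 + c + 1 ≠ 0 := by
      have := quad_ne_zero hp3 hc0 (one_ne_zero : (1 : ZMod p) ≠ 0)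
      simpa using this
    have hval : ((α * v⁻¹ : (ZMod p)ˣ) : ZMod p) = A * c⁻¹ := by
      rw [Units.val_mul, hα, Units.val_mk0]
      congr 1
      exact (Units.val_inv_eq_inv_val v)
    rw [hval]
    have e1 : A ^ (p - 3) = (A ^ 2)⁻¹ := by
      apply eq_inv_of_mul_eq_one_left
      rw [← pow_add]
      have : p - 3 + 2 = p - 1 := by omega
      rw [this]; exact hA1
    have e2 : c ^ (2 * (p - 1) + 2 - k.val) = c ^ 2 * (c ^ k.val)⁻¹ := by
      rw [eq_mul_inv_iff_mul_eq₀ (pow_ne_zero _ hc0), ← pow_add]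
      have hk := k.isLt
      have : 2 * (p - 1) + 2 - k.val + k.val = (p - 1) * 2 + 2 := by omega
      rw [this, pow_add, pow_mul, hc1, one_pow, one_mul]
    have hd : A ^ 2 + A * (A * c⁻¹) + (A * c⁻¹) ^ 2
        = A ^ 2 * (c ^ 2 + c + 1) * (c ^ 2)⁻¹ := by
      field_simp
    rw [hd, pow_add, e1, e2, mul_pow]
    rw [mul_inv, mul_inv, inv_inv, inv_pow]
    field_simp
  -- take determinants
  have hdet := congrArg Matrix.det key
  rw [Matrix.det_mul, Matrix.det_mul, Matrix.det_diagonal,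
    Matrix.det_permute' σ (Matrix.vandermonde (iot p))] at hdet
  -- the sign of σ is 1
  have haddpow : ∀ c : ℕ, Equiv.addRight ((c : ℕ) : Fin (p - 1))
      = (Equiv.addRight ((1 : ℕ) : Fin (p - 1))) ^ c := by
    intro c
    induction c with
    | zero =>
      ext x
      simp
    | succ c ih =>
      ext x
      rw [pow_succ]
      have : ((c + 1 : ℕ) : Fin (p - 1)) = ((c : ℕ) : Fin (p - 1)) + 1 := by push_cast; ring
      simp only [Equiv.Perm.mul_apply, ← ih, Equiv.coe_addRight, this]
      push_cast
      rw [add_right_comm x, add_assoc]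
  have hsign : (Equiv.Perm.sign σ : ℤˣ) = 1 := by
    rw [hσ, haddpow (p - 3), map_pow]
    have : p - 3 = 2 * (3 * a + 1) := by omega
    rw [this, pow_mul, Int.units_sq, one_pow]
  rw [hsign] at hdet
  have hVne : (Matrix.vandermonde (iot p)).det ≠ 0 := by
    rw [Matrix.det_vandermonde]
    apply Finset.prod_ne_zero_iff.mpr
    intro i _
    apply Finset.prod_ne_zero_iff.mpr
    intro j hj
    have hij : j ≠ i := (Finset.mem_Ioi.mp hj).ne'
    exact sub_ne_zero.mpr fun h => hij (iot_inj h)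
  have : (Mmat p).det * (Matrix.vandermonde (iot p)).det
      = (∏ k : Fin (p - 1), S p (2 * (p - 1) + 2 - k.val)) * (Matrix.vandermonde (iot p)).det := by
    rw [hdet]; push_cast; ring
  exact mul_right_cancel₀ hVne this


lemma prod_S (a : ℕ) (hp : p = 6 * a + 5) :
    ∏ k : Fin (p - 1), S p (2 * (p - 1) + 2 - k.val) = -(2 : ZMod p) ^ (2 * a + 1) := by
  haveI : NeZero (6 * a + 4) := ⟨by omega⟩
  have hN0 : ((6 * a + 4 : ℕ) : ZMod (6 * a + 4)) = 0 := ZMod.natCast_self _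
  set mc : ZMod (6 * a + 4) := ((4 * a + 3 : ℕ) : ZMod (6 * a + 4)) with hmc
  have hc3 : (3 : ZMod (6 * a + 4)) * mc = 1 := by
    rw [hmc]; push_cast at hN0 ⊢; linear_combination 2 * hN0
  -- rewrite each factor via S_eval and identify the argument of the indicator
  have hfac : ∀ k : Fin (p - 1), S p (2 * (p - 1) + 2 - k.val)
      = 2 * (3 : ZMod p)⁻¹ -
        (if (mc * (k.val : ℕ) - 2 * mc).val < 4 * a + 3 then 1 else 0) := by
    intro k
    rw [S_eval a hp]
    congr 2
    have hk := k.isLt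
    have hle : k.val ≤ 2 * (6 * a + 4) + 2 := by omega
    have h1 : 2 * (p - 1) + 2 - k.val = 2 * (6 * a + 4) + 2 - k.val := by omega
    rw [h1, Nat.cast_mul, Nat.cast_sub hle]
    have h2 : ((2 * (6 * a + 4) + 2 : ℕ) : ZMod (6 * a + 4)) = 2 := by
      push_cast at hN0 ⊢
      linear_combination 2 * hN0
    rw [h2, hmc]
    push_cast
    ring
  rw [Finset.prod_congr rfl fun k _ => hfac k]
  -- the map k ↦ mc * k - 2mc is a bijection Fin (p-1) → ZMod (6a+4)
  have hbij : Function.Bijective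
      (fun k : Fin (p - 1) => mc * ((k.val : ℕ) : ZMod (6 * a + 4)) - 2 * mc) := by
    have hcast : Function.Bijective
        (fun k : Fin (p - 1) => ((k.val : ℕ) : ZMod (6 * a + 4))) := by
      rw [Fintype.bijective_iff_injective_and_card]
      constructor
      · intro i j h
        have hi := i.isLt; have hj := j.isLt
        have h1 := congrArg ZMod.val h
        rw [ZMod.val_natCast, ZMod.val_natCast,
          Nat.mod_eq_of_lt (by omega), Nat.mod_eq_of_lt (by omega)] at h1
        exact Fin.ext h1
      · rw [ZMod.card, Fintype.card_fin]; omega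
    have haff : Function.Bijective
        (fun z : ZMod (6 * a + 4) => mc * z - 2 * mc) := by
      apply Function.bijective_iff_has_inverse.mpr
      refine ⟨fun z => 3 * (z + 2 * mc), fun z => ?_, fun z => ?_⟩
      · simp only
        linear_combination z * hc3
      · simp only
        linear_combination (z + 2 * mc) * hc3
    exact haff.comp hcast
  have hprod : ∏ k : Fin (p - 1),
      (2 * (3 : ZMod p)⁻¹ - (if (mc * ((k.val : ℕ) : ZMod (6*a+4)) - 2 * mc).val < 4 * a + 3 then 1 else 0))
      = ∏ z : ZMod (6 * a + 4),
        (2 * (3 : ZMod p)⁻¹ - (if z.val < 4 * a + 3 then 1 else 0)) :=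
    Fintype.prod_bijective _ hbij _ _ fun k => rfl
  rw [hprod]
  -- compute the product over ZMod (6a+4)
  have hsplit : ∀ z : ZMod (6 * a + 4),
      2 * (3 : ZMod p)⁻¹ - (if z.val < 4 * a + 3 then 1 else 0)
      = if z.val < 4 * a + 3 then 2 * (3 : ZMod p)⁻¹ - 1 else 2 * (3 : ZMod p)⁻¹ := by
    intro z; split_ifs <;> ring
  rw [Finset.prod_congr rfl fun z _ => hsplit z, Finset.prod_ite]
  rw [Finset.prod_const, Finset.prod_const]
  have hcard1 : (Finset.univ.filter fun z : ZMod (6 * a + 4) => z.val < 4 * a + 3).card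
      = 4 * a + 3 := by
    have hbc : (Finset.univ.filter fun z : ZMod (6 * a + 4) => z.val < 4 * a + 3).card
        = (Finset.range (4 * a + 3)).card := by
      apply Finset.card_bij' (fun z _ => z.val) (fun r _ => ((r : ℕ) : ZMod (6 * a + 4)))
      · intro z hz
        exact Finset.mem_range.mpr (Finset.mem_filter.mp hz).2
      · intro r hr
        have hr' := Finset.mem_range.mp hr
        refine Finset.mem_filter.mpr ⟨Finset.mem_univ _, ?_⟩
        rw [ZMod.val_natCast, Nat.mod_eq_of_lt (by omega)]
        omega
      · intro z hz
        exact ZMod.natCast_rightInverse z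
      · intro r hr
        have hr' := Finset.mem_range.mp hr
        rw [ZMod.val_natCast, Nat.mod_eq_of_lt (by omega)]
    rw [hbc, Finset.card_range]
  have hcard2 : (Finset.univ.filter fun z : ZMod (6 * a + 4) => ¬ z.val < 4 * a + 3).card
      = 2 * a + 1 := by
    have := Finset.card_filter_add_card_filter_not
      (s := (Finset.univ : Finset (ZMod (6 * a + 4))))
      (p := fun z => z.val < 4 * a + 3)
    rw [Finset.card_univ, ZMod.card, hcard1] at this
    omega
  rw [hcard1, hcard2]
  -- final arithmetic in ZMod p
  have h3ne : (3 : ZMod p) ≠ 0 := by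
    intro h
    have h3 : ((3 : ℕ) : ZMod p) = 0 := by push_cast; exact h
    have := (ZMod.natCast_eq_zero_iff 3 p).mp h3
    have := (Nat.prime_dvd_prime_iff_eq (Fact.out : p.Prime) (by norm_num)).mp this
    omega
  have hF : (3 : ZMod p) ^ (6 * a + 4) = 1 := by
    have := ZMod.pow_card_sub_one_eq_one h3ne
    rwa [show p - 1 = 6 * a + 4 by omega] at this
  have e1 : 2 * (3 : ZMod p)⁻¹ - 1 = -(3 : ZMod p)⁻¹ := by
    field_simp
    norm_num
  rw [e1, Odd.neg_pow ⟨2 * a + 1, by ring⟩, mul_pow]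
  have e2 : ((3 : ZMod p)⁻¹) ^ (4 * a + 3) * ((3 : ZMod p)⁻¹) ^ (2 * a + 1)
      = 1 := by
    rw [← pow_add, show 4 * a + 3 + (2 * a + 1) = 6 * a + 4 by ring, inv_pow, hF, inv_one]
  calc -(3 : ZMod p)⁻¹ ^ (4 * a + 3) * ((2 : ZMod p) ^ (2 * a + 1) * (3 : ZMod p)⁻¹ ^ (2 * a + 1))
      = -((2 : ZMod p) ^ (2 * a + 1)) * ((3 : ZMod p)⁻¹ ^ (4 * a + 3) * (3 : ZMod p)⁻¹ ^ (2 * a + 1)) := by ring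
    _ = -(2 : ZMod p) ^ (2 * a + 1) := by rw [e2, mul_one]

lemma cast_Dp (hp3 : p % 3 = 2) :
    ((Dp p 1 1 : ℤ) : ZMod p) = (Mmat p).det := by
  have : ((Dp p 1 1 : ℤ) : ZMod p) = (Int.castRingHom (ZMod p)) (Dp p 1 1) := rfl
  rw [this, Dp, RingHom.map_det]
  congr 1
  ext i j
  simp only [RingHom.mapMatrix_apply, Matrix.map_apply, Matrix.of_apply, Mmat]
  have hb : iot p i ^ 2 + iot p i * iot p j + iot p j ^ 2 ≠ 0 :=
    quad_ne_zero hp3 (iot_ne_zero i) (iot_ne_zero j)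
  rw [← pow_sub_two hb]
  simp only [Int.coe_castRingHom, map_pow]
  push_cast [iot]
  ring

end DpAux

theorem legendre_Dp_one_one (p : ℕ) [Fact p.Prime] (hodd : p % 2 = 1)
    (hp3 : p % 3 = 2) :
    legendreSym p (Dp p 1 1) = legendreSym p (-2) := by
  have hp2 := (Fact.out : p.Prime).two_le
  obtain ⟨a, ha⟩ : ∃ a, p = 6 * a + 5 := ⟨(p - 5) / 6, by omega⟩
  have hcast : ((Dp p 1 1 : ℤ) : ZMod p) = ((-2 * (2 ^ a) ^ 2 : ℤ) : ZMod p) := by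
    rw [DpAux.cast_Dp hp3, DpAux.detM a ha, DpAux.prod_S a ha]
    push_cast
    rw [pow_succ, two_mul, pow_add]
    ring
  have h2ne : ((2 ^ a : ℤ) : ZMod p) ≠ 0 := by
    push_cast
    apply pow_ne_zero
    intro h
    have h2 : ((2 : ℕ) : ZMod p) = 0 := by push_cast; exact h
    have hdvd := (ZMod.natCast_eq_zero_iff 2 p).mp h2
    have := Nat.le_of_dvd (by norm_num) hdvd
    omega
  have hleg : legendreSym p (Dp p 1 1) = legendreSym p (-2 * (2 ^ a) ^ 2) := by
    unfold legendreSym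
    rw [hcast]
  rw [hleg, legendreSym.mul, legendreSym.sq_one' (p := p) h2ne, mul_one]
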